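/- Let τ be a random variable with Poisson distribution with parameter A ≥ 2. Then there exists an absolute constant C₁ > 0 such that for all p ≥ 2, E[|τ - A|^p]^{1/p} ≤ C₁ √A · p / log p. -/

import Mathlib

open MeasureTheory ProbabilityTheory Real
open scoped Nat ENNReal NNReal

lemma poissonPMF_toReal (A : NNReal) (n : ℕ) :
    ((poissonPMF A) n).toReal = poissonPMFReal A n := by
  rw [show (poissonPMF A) n = ENNReal.ofReal (poissonPMFReal A n) from rfl]
  exact ENNReal.toReal_ofReal poissonPMFReal_nonneg

lemma hasSum_poisson (A : NNReal) {t : ℝ} (ht : 0 ≤ t) :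
    HasSum (fun n : ℕ => ((poissonPMF A) n).toReal * t ^ n) (Real.exp (A * (t - 1))) := by
  have h : ∀ n : ℕ, ((poissonPMF A) n).toReal * t ^ n
      = Real.exp (-(A:ℝ)) * (((A:ℝ) * t) ^ n / (n ! : ℝ)) := by
    intro n
    rw [poissonPMF_toReal, poissonPMFReal]
    rw [mul_pow]
    ring
  have h2 : HasSum (fun n : ℕ => ((A:ℝ) * t) ^ n / (n ! : ℝ)) (Real.exp ((A:ℝ) * t)) := by
    rw [exp_eq_exp_ℝ]
    exact NormedSpace.expSeries_div_hasSum_exp ((A:ℝ) * t)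
  have := h2.mul_left (Real.exp (-(A:ℝ)))
  rw [← Real.exp_add] at this
  have heq : -(A:ℝ) + (A:ℝ) * t = (A:ℝ) * (t - 1) := by ring
  rw [heq] at this
  simpa only [← h] using this

lemma integrable_pow_poisson (A : NNReal) {t : ℝ} (ht : 0 ≤ t) :
    Integrable (fun n : ℕ => t ^ n) (poissonMeasure A) := by
  constructor
  · exact (measurable_from_top).aestronglyMeasurable
  · rw [hasFiniteIntegral_def]
    rw [MeasureTheory.lintegral_countable']
    have hm : ∀ n : ℕ, ‖t ^ n‖ₑ * (poissonMeasure A) {n}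
        = ENNReal.ofReal (((poissonPMF A) n).toReal * t ^ n) := by
      intro n
      rw [show (poissonMeasure A) {n} = (poissonPMF A) n by
        rw [poissonMeasure_singleton, ← poissonPMFReal_ofReal_eq_poissonPMF]; rfl]
      rw [ENNReal.ofReal_mul ENNReal.toReal_nonneg]
      rw [ENNReal.ofReal_toReal (PMF.apply_ne_top _ _)]
      rw [mul_comm]
      congr 1
      rw [← Real.enorm_eq_ofReal (pow_nonneg ht n)]
    simp_rw [hm]
    rw [← ENNReal.ofReal_tsum_of_nonneg
      (fun n => mul_nonneg ENNReal.toReal_nonneg (pow_nonneg ht n))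
      (hasSum_poisson A ht).summable]
    exact ENNReal.ofReal_lt_top

lemma integral_pow_poisson (A : NNReal) {t : ℝ} (ht : 0 ≤ t) :
    ∫ n : ℕ, t ^ n ∂(poissonMeasure A) = Real.exp (A * (t - 1)) := by
  rw [integral_poissonMeasure' (integrable_pow_poisson A ht)]
  simp_rw [smul_eq_mul]
  refine Eq.trans (tsum_congr fun n => ?_) (hasSum_poisson A ht).tsum_eq
  rw [poissonPMF_toReal, poissonPMFReal]

lemma exp_quad {x : ℝ} (hx : |x| ≤ 1) : Real.exp x ≤ 1 + x + x ^ 2 := by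
  have h := Real.exp_bound hx (n := 2) two_pos
  simp [Finset.sum_range_succ] at h
  rw [abs_le] at h
  nlinarith [sq_abs x, h.2]

lemma abs_rpow_le {x p l : ℝ} (hp : 0 < p) (hl : 0 < l) :
    |x| ^ p ≤ (p / (Real.exp 1 * l)) ^ p * (Real.exp (l * x) + Real.exp (-(l * x))) := by
  set y := l * |x| with hy
  have hy0 : 0 ≤ y := mul_nonneg hl.le (abs_nonneg x)
  -- y ≤ (p / exp 1) * exp (y / p)
  have h1 : y ≤ (p / Real.exp 1) * Real.exp (y / p) := by
    have := Real.add_one_le_exp (y / p - 1)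
    have h2 : y / p ≤ Real.exp (y / p - 1) := by linarith
    have h3 : Real.exp (y / p - 1) = Real.exp (y / p) / Real.exp 1 := by
      rw [Real.exp_sub]
    rw [h3] at h2
    calc y = (y / p) * p := by field_simp
      _ ≤ (Real.exp (y / p) / Real.exp 1) * p :=
          mul_le_mul_of_nonneg_right h2 hp.le
      _ = (p / Real.exp 1) * Real.exp (y / p) := by ring
  -- raise to power p
  have h4 : y ^ p ≤ ((p / Real.exp 1) * Real.exp (y / p)) ^ p :=
    Real.rpow_le_rpow hy0 h1 hp.le
  have h5 : ((p / Real.exp 1) * Real.exp (y / p)) ^ p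
      = (p / Real.exp 1) ^ p * Real.exp y := by
    rw [Real.mul_rpow (by positivity) (Real.exp_pos _).le, ← Real.exp_mul]
    congr 2
    field_simp
  have h6 : Real.exp y ≤ Real.exp (l * x) + Real.exp (-(l * x)) := by
    rcases abs_cases x with ⟨h, _⟩ | ⟨h, _⟩
    · rw [hy, h]
      nlinarith [(Real.exp_pos (-(l * x))).le]
    · rw [hy, h, show l * -x = -(l * x) by ring]
      nlinarith [(Real.exp_pos (l * x)).le]
  have hxy : |x| = y / l := by rw [hy]; field_simp
  rw [hxy, Real.div_rpow hy0 hl.le]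
  rw [div_le_iff₀ (by positivity : (0:ℝ) < l ^ p)] at *
  calc y ^ p ≤ (p / Real.exp 1) ^ p * Real.exp y := le_trans h4 (le_of_eq h5)
    _ ≤ (p / Real.exp 1) ^ p * (Real.exp (l * x) + Real.exp (-(l * x))) := by
        apply mul_le_mul_of_nonneg_left h6 (by positivity)
    _ = (p / (Real.exp 1 * l)) ^ p * (Real.exp (l * x) + Real.exp (-(l * x))) * l ^ p := by
        rw [show p / (Real.exp 1 * l) = (p / Real.exp 1) / l by ring,
          Real.div_rpow (by positivity) hl.le]
        field_simp

lemma moment_bound (A : NNReal) {p l : ℝ} (hp : 0 < p) (hl : 0 < l) :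
    ∫ n : ℕ, |(n : ℝ) - A| ^ p ∂(poissonMeasure A)
      ≤ (p / (Real.exp 1 * l)) ^ p *
        (Real.exp (A * (Real.exp l - l - 1)) + Real.exp (A * (Real.exp (-l) + l - 1))) := by
  set c : ℝ := (p / (Real.exp 1 * l)) ^ p with hc
  have hc0 : 0 ≤ c := by positivity
  set g : ℕ → ℝ := fun n =>
    c * (Real.exp (-(l * A)) * (Real.exp l) ^ n + Real.exp (l * A) * (Real.exp (-l)) ^ n)
    with hg
  have hgint : Integrable g (poissonMeasure A) := by
    apply Integrable.const_mul
    exact ((integrable_pow_poisson A (Real.exp_pos l).le).const_mul _).add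
      ((integrable_pow_poisson A (Real.exp_pos (-l)).le).const_mul _)
  have hpt : ∀ n : ℕ, |(n : ℝ) - A| ^ p ≤ g n := by
    intro n
    have h := abs_rpow_le (x := (n : ℝ) - A) hp hl
    have e1 : Real.exp (l * ((n : ℝ) - A)) = Real.exp (-(l * A)) * (Real.exp l) ^ n := by
      rw [← Real.exp_nat_mul, ← Real.exp_add]
      congr 1; ring
    have e2 : Real.exp (-(l * ((n : ℝ) - A))) = Real.exp (l * A) * (Real.exp (-l)) ^ n := by
      rw [← Real.exp_nat_mul, ← Real.exp_add]
      congr 1; ring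
    rw [e1, e2] at h
    simpa [hg, mul_add] using h
  have hmono := integral_mono_of_nonneg
    (Filter.Eventually.of_forall (fun n => Real.rpow_nonneg (abs_nonneg _) p))
    hgint (Filter.Eventually.of_forall hpt)
  refine hmono.trans (le_of_eq ?_)
  rw [hg]
  simp only
  rw [integral_const_mul]
  rw [integral_add ((integrable_pow_poisson A (Real.exp_pos l).le).const_mul _)
    ((integrable_pow_poisson A (Real.exp_pos (-l)).le).const_mul _)]
  rw [integral_const_mul, integral_const_mul,
    integral_pow_poisson A (Real.exp_pos l).le, integral_pow_poisson A (Real.exp_pos (-l)).le]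
  rw [← Real.exp_add, ← Real.exp_add]
  congr 3 <;> ring

lemma key (A : NNReal) {p l c : ℝ} (hp : 2 ≤ p) (hl : 0 < l)
    (h1 : (A : ℝ) * (Real.exp l - l - 1) ≤ c * p)
    (h2 : (A : ℝ) * (Real.exp (-l) + l - 1) ≤ c * p) :
    (∫ n : ℕ, |(n : ℝ) - A| ^ p ∂(poissonMeasure A)) ^ (1 / p)
      ≤ 2 * Real.exp (c - 1) * p / l := by
  have hp0 : 0 < p := lt_of_lt_of_le two_pos hp
  have hI0 : 0 ≤ ∫ n : ℕ, |(n : ℝ) - A| ^ p ∂(poissonMeasure A) :=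
    integral_nonneg (fun n => Real.rpow_nonneg (abs_nonneg _) p)
  have hb : ∫ n : ℕ, |(n : ℝ) - A| ^ p ∂(poissonMeasure A)
      ≤ (p / (Real.exp 1 * l)) ^ p * (2 * Real.exp (c * p)) := by
    refine (moment_bound A hp0 hl).trans ?_
    have := Real.exp_le_exp.mpr h1
    have := Real.exp_le_exp.mpr h2
    have hpos : (0:ℝ) ≤ (p / (Real.exp 1 * l)) ^ p := by positivity
    nlinarith [Real.exp_pos (c * p)]
  calc (∫ n : ℕ, |(n : ℝ) - A| ^ p ∂(poissonMeasure A)) ^ (1 / p)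
      ≤ ((p / (Real.exp 1 * l)) ^ p * (2 * Real.exp (c * p))) ^ (1 / p) :=
        Real.rpow_le_rpow hI0 hb (by positivity)
    _ = (p / (Real.exp 1 * l)) * (2 * Real.exp (c * p)) ^ (1 / p) := by
        rw [Real.mul_rpow (by positivity) (by positivity),
          ← Real.rpow_mul (by positivity), mul_one_div, div_self (ne_of_gt hp0),
          Real.rpow_one]
    _ ≤ (p / (Real.exp 1 * l)) * (2 * Real.exp c) := by
        apply mul_le_mul_of_nonneg_left _ (by positivity)
        rw [Real.mul_rpow (by norm_num) (Real.exp_pos _).le, ← Real.exp_mul]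
        have h2p : (2:ℝ) ^ (1/p) ≤ 2 := by
          calc (2:ℝ) ^ (1/p) ≤ (2:ℝ) ^ (1:ℝ) :=
              Real.rpow_le_rpow_of_exponent_le one_le_two
                (by rw [div_le_one hp0]; linarith)
            _ = 2 := Real.rpow_one 2
        have : c * p * (1 / p) = c := by field_simp
        rw [this]
        exact mul_le_mul_of_nonneg_right h2p (Real.exp_pos _).le
    _ = 2 * Real.exp (c - 1) * p / l := by
        rw [Real.exp_sub]
        field_simp

lemma log_le_two_sqrt {x : ℝ} (hx : 1 ≤ x) : Real.log x ≤ 2 * Real.sqrt x := by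
  have h0 : 0 < x := lt_of_lt_of_le one_pos hx
  have hs : Real.log (Real.sqrt x) ≤ Real.sqrt x - 1 :=
    Real.log_le_sub_one_of_pos (Real.sqrt_pos.mpr h0)
  have h2 : Real.log (Real.sqrt x) = Real.log x / 2 := Real.log_sqrt h0.le
  linarith [Real.sqrt_nonneg x]

/-- Centered moments of a Poisson random variable with parameter `A ≥ 2`:
`‖τ - A‖_p ≤ C₁ √A · p / log p` for `p ≥ 2`, with an absolute constant `C₁`. -/
theorem stmt2 :
    ∃ C₁ : ℝ, 0 < C₁ ∧
      ∀ A : NNReal, 2 ≤ (A : ℝ) →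
        ∀ p : ℝ, 2 ≤ p →
          (∫ n : ℕ, |(n : ℝ) - A| ^ p ∂(poissonMeasure A)) ^ (1 / p)
            ≤ C₁ * Real.sqrt A * p / Real.log p := by
  refine ⟨4 * Real.exp (Real.exp 1 - 1), by positivity, ?_⟩
  intro A hA p hp
  have hA0 : (0:ℝ) < A := lt_of_lt_of_le two_pos hA
  have hp0 : (0:ℝ) < p := lt_of_lt_of_le two_pos hp
  have hlogp : 0 < Real.log p := Real.log_pos (by linarith)
  have hsA : 0 < Real.sqrt A := Real.sqrt_pos.mpr hA0
  have hE1 : (1:ℝ) ≤ Real.exp (Real.exp 1 - 1) := by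
    rw [Real.one_le_exp_iff]
    nlinarith [Real.add_one_le_exp 1]
  rcases le_total p A with hpA | hAp
  · -- small p : p ≤ A
    set l := Real.sqrt (p / A) with hldef
    have hl : 0 < l := Real.sqrt_pos.mpr (by positivity)
    have hl1 : l ≤ 1 := Real.sqrt_le_one.mpr (by rw [div_le_one hA0]; exact hpA)
    have hl2 : l ^ 2 = p / A := Real.sq_sqrt (by positivity)
    have he1 : Real.exp l ≤ 1 + l + l ^ 2 := exp_quad (by rwa [abs_of_nonneg hl.le])
    have he2 : Real.exp (-l) ≤ 1 - l + l ^ 2 := by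
      have h := exp_quad (x := -l) (by rwa [abs_neg, abs_of_nonneg hl.le])
      nlinarith
    have hall : (A:ℝ) * l ^ 2 = p := by rw [hl2]; field_simp
    have h1 : (A:ℝ) * (Real.exp l - l - 1) ≤ 1 * p := by nlinarith
    have h2 : (A:ℝ) * (Real.exp (-l) + l - 1) ≤ 1 * p := by nlinarith
    refine (key A hp hl h1 h2).trans ?_
    rw [show (1:ℝ) - 1 = 0 by ring, Real.exp_zero, mul_one]
    rw [div_le_div_iff₀ hl hlogp]
    have hAl : Real.sqrt A * l = Real.sqrt p := by
      rw [hldef, ← Real.sqrt_mul hA0.le]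
      congr 1; field_simp
    have hlp : Real.log p ≤ 2 * Real.sqrt p := log_le_two_sqrt (by linarith)
    have hsqp : Real.sqrt p * Real.sqrt p = p := Real.mul_self_sqrt hp0.le
    calc 2 * p * Real.log p ≤ 2 * p * (2 * Real.sqrt p) := by nlinarith
      _ = 4 * (Real.sqrt A * l) * p := by rw [hAl]; ring
      _ ≤ 4 * Real.exp (Real.exp 1 - 1) * Real.sqrt A * p * l := by
          nlinarith [mul_nonneg (by linarith : (0:ℝ) ≤ Real.exp (Real.exp 1 - 1) - 1)
            (mul_pos (mul_pos hsA hl) hp0).le]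
  · -- large p : A ≤ p
    set l := 1 + Real.log (p / A) / 2 with hldef
    have hlog0 : 0 ≤ Real.log (p / A) := Real.log_nonneg (by rw [le_div_iff₀ hA0]; nlinarith)
    have hl : 0 < l := by rw [hldef]; linarith
    have hs : Real.exp (Real.log (p / A) / 2) = Real.sqrt (p / A) := by
      rw [← Real.log_sqrt (by positivity), Real.exp_log (Real.sqrt_pos.mpr (by positivity))]
    have hel : Real.exp l = Real.exp 1 * Real.sqrt (p / A) := by
      rw [hldef, Real.exp_add, hs]
    have hAsq : (A:ℝ) * Real.sqrt (p / A) ≤ p := by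
      have heq : (A:ℝ) * Real.sqrt (p / A) = Real.sqrt ((A:ℝ) ^ 2 * (p / A)) := by
        rw [Real.sqrt_mul (by positivity), Real.sqrt_sq hA0.le]
      rw [heq, show (A:ℝ) ^ 2 * (p / A) = A * p by field_simp]
      calc Real.sqrt ((A:ℝ) * p) ≤ Real.sqrt (p * p) := Real.sqrt_le_sqrt (by nlinarith)
        _ = p := Real.sqrt_mul_self hp0.le
    have hael : (A:ℝ) * Real.exp l ≤ Real.exp 1 * p := by
      rw [hel]
      calc (A:ℝ) * (Real.exp 1 * Real.sqrt (p / A))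
          = Real.exp 1 * ((A:ℝ) * Real.sqrt (p / A)) := by ring
        _ ≤ Real.exp 1 * p := mul_le_mul_of_nonneg_left hAsq (Real.exp_pos 1).le
    have h1 : (A:ℝ) * (Real.exp l - l - 1) ≤ Real.exp 1 * p := by nlinarith
    have h2 : (A:ℝ) * (Real.exp (-l) + l - 1) ≤ Real.exp 1 * p := by
      have heneg : Real.exp (-l) ≤ 1 := by
        rw [show (1:ℝ) = Real.exp 0 by rw [Real.exp_zero]]
        exact Real.exp_le_exp.mpr (by linarith)
      have hle : Real.exp (-l) + l - 1 ≤ Real.exp l := by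
        have := Real.add_one_le_exp l
        linarith
      calc (A:ℝ) * (Real.exp (-l) + l - 1) ≤ (A:ℝ) * Real.exp l :=
            mul_le_mul_of_nonneg_left hle hA0.le
        _ ≤ Real.exp 1 * p := hael
    refine (key A hp hl h1 h2).trans ?_
    rw [div_le_div_iff₀ hl hlogp]
    have hmain : Real.log p ≤ 2 * Real.sqrt A * l := by
      have hlogA : Real.log A ≤ 2 * Real.sqrt A := log_le_two_sqrt (by linarith)
      have hsplit : Real.log (p / A) = Real.log p - Real.log A :=
        Real.log_div (ne_of_gt hp0) (ne_of_gt hA0)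
      have hsA1 : 1 ≤ Real.sqrt A := by
        rw [show (1:ℝ) = Real.sqrt 1 by simp]
        exact Real.sqrt_le_sqrt (by linarith)
      have hmul : Real.log (p / A) ≤ Real.sqrt A * Real.log (p / A) :=
        le_mul_of_one_le_left hlog0 hsA1
      calc Real.log p = Real.log A + Real.log (p / A) := by rw [hsplit]; ring
        _ ≤ 2 * Real.sqrt A + Real.sqrt A * Real.log (p / A) := by linarith
        _ = 2 * Real.sqrt A * l := by rw [hldef]; ring
    nlinarith [Real.exp_pos (Real.exp 1 - 1),
      mul_le_mul_of_nonneg_left hmain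
        (by positivity : (0:ℝ) ≤ 2 * Real.exp (Real.exp 1 - 1) * p)]
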